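/- arXiv:2103.16428 — 5 statements merged into one kernel-verified Lean document; each statement's English description precedes it below -/
import Mathlib

section
/- For 1 < γ < 3/2, the point with S = 0, Y₁ = 2√((3-2γ)(γ-1))/(2-γ), Y₂ = 2(4-3γ)Y₁ is an equilibrium point of the system dY₁/dχ = (4(γ-1)/(2-γ))(1-S²)[4γ(3-2γ) - Y₁L] + 4(10-7γ)(γ-1)(S² - Y₁²) - Y₂², dY₂/dχ = (4(γ-1)/(2-γ))(1-S²)[4(3-2γ)(12γ-4-7γ²) - Y₂L] + 4(γ-1)(2-γ)Y₁Y₂ + (6-5γ)[16(γ-1)(3-2γ)(S² - Y₁²) - Y₂²], dS/dχ = -(4(γ-1)/(2-γ))S(1-S²)L, and the scaled energy density Y₄ = (3/(16(γ-1)))[16(3-2γ)(γ-1)(1-Y₁²) - Y₂²] vanishes there. -/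
noncomputable def L (γ Y₁ Y₂ : ℝ) : ℝ := (-20 + 36*γ - 15*γ^2) * Y₁ + (4 - 3*γ) * Y₂

noncomputable def F₁ (γ Y₁ Y₂ S : ℝ) : ℝ :=
  (4*(γ-1)/(2-γ)) * (1 - S^2) * (4*γ*(3-2*γ) - Y₁ * L γ Y₁ Y₂)
    + 4*(10-7*γ)*(γ-1) * (S^2 - Y₁^2) - Y₂^2

noncomputable def F₂ (γ Y₁ Y₂ S : ℝ) : ℝ :=
  (4*(γ-1)/(2-γ)) * (1 - S^2) * (4*(3-2*γ)*(12*γ-4-7*γ^2) - Y₂ * L γ Y₁ Y₂)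
    + 4*(γ-1)*(2-γ)*Y₁*Y₂
    + (6-5*γ) * (16*(γ-1)*(3-2*γ)*(S^2 - Y₁^2) - Y₂^2)

noncomputable def F₃ (γ Y₁ Y₂ S : ℝ) : ℝ :=
  -(4*(γ-1)/(2-γ)) * S * (1 - S^2) * L γ Y₁ Y₂

theorem INF_equilibrium (γ : ℝ) (h1 : 1 < γ) (h2 : γ < 3/2)
    (Y₁ Y₂ : ℝ)
    (hY₁ : Y₁ = 2 * Real.sqrt ((3-2*γ)*(γ-1)) / (2-γ))
    (hY₂ : Y₂ = 2*(4-3*γ)*Y₁) :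
    F₁ γ Y₁ Y₂ 0 = 0 ∧ F₂ γ Y₁ Y₂ 0 = 0 ∧ F₃ γ Y₁ Y₂ 0 = 0 ∧
      (3/(16*(γ-1))) * (16*(3-2*γ)*(γ-1)*(1 - Y₁^2) - Y₂^2) = 0 := by
  have hγ2 : (2 - γ) ≠ 0 := by nlinarith
  have hnn : (0:ℝ) ≤ (3-2*γ)*(γ-1) := by nlinarith
  have hsq : (2-γ)^2 * Y₁^2 = 4*((3-2*γ)*(γ-1)) := by
    rw [hY₁, div_pow, mul_pow, Real.sq_sqrt hnn]
    field_simp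
    norm_num
    ring
  subst hY₂
  refine ⟨?_, ?_, ?_, ?_⟩
  · unfold F₁ L
    field_simp
    linear_combination (-4*γ) * hsq
  · unfold F₂ L
    field_simp
    linear_combination (28*γ^2-48*γ+16) * hsq
  · unfold F₃ L; ring
  · have hγ1 : (γ - 1) ≠ 0 := by nlinarith
    field_simp
    linear_combination (-12) * hsq
end

section
/- Let 1 < γ < 3/2 and suppose (Y₁(χ), Y₂(χ), S(χ)) solves the ODE system, with Y₄ = (3/(16(γ-1)))[16(3-2γ)(γ-1)(1-Y₁²) - Y₂²] satisfying dY₄/dχ = 2[(5γ-6)Y₂ + 4(γ-1)(7γ-10)Y₁ - (4(γ-1)/(2-γ))(1-S²)L]Y₄, and Y₄ > 0, 0 < S < 1. Then the function G = Y₄^{(81/40)Q₂(γ)} · (1-S²)^{(81/40)(2-γ)(10-7γ)} / S^{(81/5)γ(3-2γ)} satisfies dG/dχ = -(81/20)(10-9γ)(2-γ)² Y₂ G along the solution. -/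
noncomputable def Y₄fun (γ : ℝ) (Y₁ Y₂ : ℝ) : ℝ :=
  (3/(16*(γ-1))) * (16*(3-2*γ)*(γ-1)*(1 - Y₁^2) - Y₂^2)

set_option maxHeartbeats 2000000 in
theorem G_monotone (γ : ℝ) (h1 : 1 < γ) (h2 : γ < 3/2)
    (Y₁ Y₂ S : ℝ → ℝ)
    (hY₁ : ∀ χ, HasDerivAt Y₁ (F₁ γ (Y₁ χ) (Y₂ χ) (S χ)) χ)
    (hY₂ : ∀ χ, HasDerivAt Y₂ (F₂ γ (Y₁ χ) (Y₂ χ) (S χ)) χ)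
    (hS : ∀ χ, HasDerivAt S (F₃ γ (Y₁ χ) (Y₂ χ) (S χ)) χ)
    (hY₄' : ∀ χ, HasDerivAt (fun χ => Y₄fun γ (Y₁ χ) (Y₂ χ))
      (2 * ((5*γ-6) * Y₂ χ + 4*(γ-1)*(7*γ-10) * Y₁ χ
        - (4*(γ-1)/(2-γ)) * (1 - (S χ)^2) * L γ (Y₁ χ) (Y₂ χ))
        * Y₄fun γ (Y₁ χ) (Y₂ χ)) χ)
    (hY₄pos : ∀ χ, 0 < Y₄fun γ (Y₁ χ) (Y₂ χ))
    (hSrange : ∀ χ, 0 < S χ ∧ S χ < 1) :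
    ∀ χ, HasDerivAt
      (fun χ => (Y₄fun γ (Y₁ χ) (Y₂ χ)) ^ ((81/40) * (-15*γ^2 + 36*γ - 20) : ℝ)
        * (1 - (S χ)^2) ^ ((81/40) * (2-γ) * (10-7*γ) : ℝ)
        / (S χ) ^ ((81/5) * γ * (3-2*γ) : ℝ))
      (-(81/20) * (10-9*γ) * (2-γ)^2 * Y₂ χ *
        ((Y₄fun γ (Y₁ χ) (Y₂ χ)) ^ ((81/40) * (-15*γ^2 + 36*γ - 20) : ℝ)
          * (1 - (S χ)^2) ^ ((81/40) * (2-γ) * (10-7*γ) : ℝ)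
          / (S χ) ^ ((81/5) * γ * (3-2*γ) : ℝ))) χ := by
  intro χ
  obtain ⟨hS0, hS1⟩ := hSrange χ
  have hA : 0 < Y₄fun γ (Y₁ χ) (Y₂ χ) := hY₄pos χ
  have hB : 0 < 1 - (S χ)^2 := by nlinarith
  have h2γ : (2:ℝ) - γ ≠ 0 := by nlinarith
  have hApow := (hY₄' χ).rpow_const
    (p := ((81/40) * (-15*γ^2 + 36*γ - 20) : ℝ)) (Or.inl hA.ne')
  have hBder : HasDerivAt (fun χ => 1 - (S χ)^2)
      (-(2 * S χ ^ 1 * F₃ γ (Y₁ χ) (Y₂ χ) (S χ))) χ := by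
    have := ((hS χ).pow 2).const_sub 1
    simpa using this
  have hBpow := hBder.rpow_const
    (p := ((81/40) * (2-γ) * (10-7*γ) : ℝ)) (Or.inl hB.ne')
  have hCpow := (hS χ).rpow_const
    (p := ((81/5) * γ * (3-2*γ) : ℝ)) (Or.inl hS0.ne')
  have hCne : (S χ) ^ ((81/5) * γ * (3-2*γ) : ℝ) ≠ 0 :=
    (Real.rpow_pos_of_pos hS0 _).ne'
  have H := (hApow.mul hBpow).div hCpow hCne
  convert H using 1
  case e'_4 => rfl
  case e'_5 => rfl
  case e'_8 => rfl
  rw [Real.rpow_sub hA, Real.rpow_sub hB, Real.rpow_sub hS0, Real.rpow_one,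
    Real.rpow_one, Real.rpow_one]
  simp only [F₃, L, pow_one, Pi.mul_apply]
  set PA := (Y₄fun γ (Y₁ χ) (Y₂ χ)) ^ ((81/40) * (-15*γ^2 + 36*γ - 20) : ℝ) with hPA
  set PB := (1 - (S χ)^2) ^ ((81/40) * (2-γ) * (10-7*γ) : ℝ) with hPB
  set PC := (S χ) ^ ((81/5) * γ * (3-2*γ) : ℝ) with hPC
  set A := Y₄fun γ (Y₁ χ) (Y₂ χ) with hAdef
  have hAne : A ≠ 0 := hA.ne'
  have hBne : 1 - (S χ)^2 ≠ 0 := hB.ne'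
  have hSne : S χ ≠ 0 := hS0.ne'
  field_simp
  ring
end

section
/- When γ = 10/9, along any solution of the ODE system with Y₄ > 0 and 0 < S < 1, the quantity Y₄³(1-S²)⁴/S¹⁴ is constant (a first integral of the system). -/
set_option maxHeartbeats 4000000 in
theorem first_integral_gamma_ten_ninths
    (Y₁ Y₂ S : ℝ → ℝ)
    (hY₁ : ∀ χ, HasDerivAt Y₁ (F₁ (10/9) (Y₁ χ) (Y₂ χ) (S χ)) χ)
    (hY₂ : ∀ χ, HasDerivAt Y₂ (F₂ (10/9) (Y₁ χ) (Y₂ χ) (S χ)) χ)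
    (hS : ∀ χ, HasDerivAt S (F₃ (10/9) (Y₁ χ) (Y₂ χ) (S χ)) χ)
    (hY₄pos : ∀ χ, 0 < Y₄fun (10/9) (Y₁ χ) (Y₂ χ))
    (hSrange : ∀ χ, 0 < S χ ∧ S χ < 1) :
    ∀ χ₁ χ₂ : ℝ,
      (Y₄fun (10/9) (Y₁ χ₁) (Y₂ χ₁))^3 * (1 - (S χ₁)^2)^4 / (S χ₁)^14 =
      (Y₄fun (10/9) (Y₁ χ₂) (Y₂ χ₂))^3 * (1 - (S χ₂)^2)^4 / (S χ₂)^14 := by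
  have hS0 : ∀ χ, S χ ≠ 0 := fun χ => (hSrange χ).1.ne'
  have key : ∀ χ, HasDerivAt
      (fun χ => (Y₄fun (10/9) (Y₁ χ) (Y₂ χ))^3 * (1 - (S χ)^2)^4 / (S χ)^14) 0 χ := by
    intro χ
    have h1 := hY₁ χ
    have h2 := hY₂ χ
    have h3 := hS χ
    simp only [Y₄fun]
    have H := (((((((h1.pow 2).const_sub 1).const_mul
        (16*(3-2*(10/9))*((10/9:ℝ)-1))).sub (h2.pow 2)).const_mul
        ((3:ℝ)/(16*((10/9:ℝ)-1)))).pow 3).mul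
        (((h3.pow 2).const_sub 1).pow 4)).div (h3.pow 14) (pow_ne_zero _ (hS0 χ))
    refine H.congr_deriv ?_
    simp only [F₁, F₂, F₃, L, Pi.pow_apply, Pi.sub_apply, Pi.mul_apply, Pi.div_apply]
    have h0 := hS0 χ
    field_simp
    ring
  intro χ₁ χ₂
  exact is_const_of_deriv_eq_zero (fun χ => (key χ).differentiableAt)
    (fun χ => (key χ).deriv) χ₁ χ₂
end

section
/- When γ = 10/9, every point (Y₁, Y₂, S) with Y₂ = -(20/9)Y₁, S² = 7/3 - 8Y₁², and 1/6 ≤ Y₁² ≤ 7/32 is an equilibrium point of the ODE system, and at every such point Y₄ = 7/3 - (32/3)Y₁² where Y₄ = (3/(16(γ-1)))[16(3-2γ)(γ-1)(1-Y₁²) - Y₂²]. -/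
theorem Wainwright_equilibria
    (Y₁ Y₂ S : ℝ)
    (hY₂ : Y₂ = -(20/9) * Y₁)
    (hS : S^2 = 7/3 - 8 * Y₁^2)
    (hlo : 1/6 ≤ Y₁^2) (hhi : Y₁^2 ≤ 7/32) :
    F₁ (10/9) Y₁ Y₂ S = 0 ∧ F₂ (10/9) Y₁ Y₂ S = 0 ∧ F₃ (10/9) Y₁ Y₂ S = 0 ∧
      Y₄fun (10/9) Y₁ Y₂ = 7/3 - (32/3) * Y₁^2 := by
  subst hY₂
  have hL : L (10/9) Y₁ (-(20/9) * Y₁) = 0 := by unfold L; ring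
  refine ⟨?_, ?_, ?_, ?_⟩
  · unfold F₁; rw [hL, hS]; ring
  · unfold F₂; rw [hL, hS]; ring
  · unfold F₃; rw [hL]; ring
  · unfold Y₄fun; ring
end

section
/- For 1 < γ < 3/2, the Collins equilibrium point with S = 1, Y₁² = (6-5γ)²/((3γ-2)(2-γ)), Y₂ = -4(10-7γ)(γ-1)Y₁/(6-5γ) has scaled energy density Y₄ = 3(10-7γ)(γ-1)/(3γ-2), where Y₄ is defined by (16(γ-1)/3)Y₄ = 16(3-2γ)(γ-1)(1-Y₁²) - Y₂²; in particular Y₄ > 0 if and only if γ < 10/7. -/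
theorem Collins_energy_density (γ : ℝ) (h1 : 1 < γ) (h2 : γ < 3/2)
    (h3 : γ ≠ 6/5) (Y₁ Y₂ Y₄ : ℝ)
    (hY₁ : Y₁^2 = (6-5*γ)^2 / ((3*γ-2) * (2-γ)))
    (hY₂ : Y₂ = -4 * (10-7*γ) * (γ-1) * Y₁ / (6-5*γ))
    (hY₄ : (16*(γ-1)/3) * Y₄ = 16*(3-2*γ)*(γ-1)*(1 - Y₁^2) - Y₂^2) :
    Y₄ = 3*(10-7*γ)*(γ-1)/(3*γ-2) ∧ (0 < Y₄ ↔ γ < 10/7) := by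
  have ha : (3*γ-2) ≠ 0 := by nlinarith
  have hb : (2-γ) ≠ 0 := by nlinarith
  have hc : (6-5*γ) ≠ 0 := by intro h; apply h3; linarith
  have hd : (γ-1) ≠ 0 := by nlinarith
  have ha' : γ*3-2 ≠ 0 := by intro h; apply ha; linarith
  have hc' : 6-γ*5 ≠ 0 := by intro h; apply hc; linarith
  have hY₁' : Y₁^2 * ((3*γ-2)*(2-γ)) = (6-5*γ)^2 := by
    rw [hY₁]; field_simp [ha']
  have hY2sq : Y₂^2 = 16*(10-7*γ)^2*(γ-1)^2 / ((3*γ-2)*(2-γ)) := by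
    rw [hY₂]
    field_simp [ha', hc']
    linear_combination (16*(10-7*γ)^2) * hY₁'
  have key : Y₄ = 3*(10-7*γ)*(γ-1)/(3*γ-2) := by
    rw [hY₁, hY2sq] at hY₄
    field_simp [ha'] at hY₄
    have key' : (Y₄ * (3*γ-2)) * (16*(γ-1)*(2-γ)) = (3*(10-7*γ)*(γ-1)) * (16*(γ-1)*(2-γ)) := by
      linear_combination (16*(γ-1)) * hY₄
    have hne : (16*(γ-1)*(2-γ)) ≠ 0 :=
      ne_of_gt (by nlinarith [mul_pos (by linarith : (0:ℝ) < γ-1) (by linarith : (0:ℝ) < 2-γ)])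
    have h5 := mul_right_cancel₀ hne key'
    field_simp
    linear_combination h5
  refine ⟨key, ?_⟩
  rw [key]
  constructor
  · intro h
    by_contra hγ
    push_neg at hγ
    have : 3*(10-7*γ)*(γ-1)/(3*γ-2) ≤ 0 := by
      apply div_nonpos_of_nonpos_of_nonneg
      · nlinarith
      · nlinarith
    linarith
  · intro h
    apply div_pos
    · nlinarith
    · nlinarith
end
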